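/- arXiv:1904.08119 — 5 statements merged into one kernel-verified Lean document; each statement's English description precedes it below -/
import Mathlib

section
/- Let S be a schedule, ≪ a version order for S, and t_j ∈ trans(S) a running transaction with c_j, a_j ∉ S, such that S is recoverable, MVSG(S, ≪) is acyclic, and S is strictly serializable. If a version order ≪' for S satisfies NWR for the triple (S, ≪, t_j) — in fact, if merely RC-Rule holds, i.e., every version x_i ∈ rs_j has c_i ∈ S — then S ∪ {c_j} is recoverable. (Lemma 3, Recoverable.) -/
/-!
A formalization of multiversion schedules, the multiversion serialization
graph (MVSG), strict serializability, recoverability, and the Non-visible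
Write Rule (NWR), following "NWR: Rethinking Thomas Write Rule for
Omittable Write Operations".

A version of a data item `x` is identified by the transaction that wrote it:
`w_i(x_i)` is recorded as `Op.write t_i x`, and the version `x_i` is the pair
`(x, t_i)`.  `r_i(x_j)` is recorded as `Op.read t_i x t_j`.
-/

namespace MVCC

/-- Operations of multiversion schedules. `read t x w` is `r_t(x_w)`
(transaction `t` reads the version of item `x` written by `w`);
`write t x` is `w_t(x_t)`; `commit t` is `c_t`; `abort t` is `a_t`. -/
inductive Op (Tx : Type*) (Item : Type*) where
  | read  (t : Tx) (x : Item) (w : Tx)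
  | write (t : Tx) (x : Item)
  | commit (t : Tx)
  | abort (t : Tx)

/-- The transaction an operation belongs to. -/
def Op.owner {Tx Item : Type*} : Op Tx Item → Tx
  | .read t _ _ => t
  | .write t _ => t
  | .commit t => t
  | .abort t => t

/-- A multiversion schedule: a set `trans` of transactions, a set `ops` of
operations (each belonging to a transaction of the schedule), and the
total operation order `<_S` (as the relation `lt`). -/
structure Schedule (Tx : Type*) (Item : Type*) where
  trans : Set Tx
  ops : Set (Op Tx Item)
  lt : Op Tx Item → Op Tx Item → Prop
  owners : ∀ p ∈ ops, Op.owner p ∈ trans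

namespace Schedule

variable {Tx Item : Type*} (S : Schedule Tx Item)

/-- `w_t(x_t) ∈ S` : the version `x_t` is written in `S`. -/
def writes (t : Tx) (x : Item) : Prop := Op.write t x ∈ S.ops

/-- `c_t ∈ S`. -/
def committed (t : Tx) : Prop := Op.commit t ∈ S.ops

/-- `a_t ∈ S`. -/
def aborted (t : Tx) : Prop := Op.abort t ∈ S.ops

/-- `t` reads the version of `x` written by the (distinct) transaction `w`,
i.e. the version `x_w ∈ rs_t`. -/
def readsFrom (t : Tx) (x : Item) (w : Tx) : Prop :=
  t ≠ w ∧ S.writes w x ∧ Op.read t x w ∈ S.ops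

/-- `p` is an operation of transaction `t` in `S` (`p ∈ t`). -/
def opOf (p : Op Tx Item) (t : Tx) : Prop := p ∈ S.ops ∧ Op.owner p = t

/-- `t` is a running transaction of `S`: `t ∈ trans(S)` and `c_t, a_t ∉ S`. -/
def running (t : Tx) : Prop := t ∈ S.trans ∧ ¬ S.committed t ∧ ¬ S.aborted t

/-- `S` is recoverable: for all distinct `t_i, t_j ∈ trans(S)`, if `t_j` reads
a version written by `t_i` and `c_j ∈ S`, then `c_i ∈ S` and `c_i <_S c_j`. -/
def Recoverable : Prop :=
  ∀ ti tj : Tx, ti ∈ S.trans → tj ∈ S.trans → ti ≠ tj →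
    (∃ x : Item, S.readsFrom tj x ti) → S.committed tj →
      S.committed ti ∧ S.lt (Op.commit ti) (Op.commit tj)

/-- `S ∪ {c_j}` : append the commit operation `c_j` at the end of `<_S`. -/
def addCommit (j : Tx) : Schedule Tx Item where
  trans := insert j S.trans
  ops := insert (Op.commit j) S.ops
  lt := fun p q => S.lt p q ∨ (p ∈ S.ops ∧ q = Op.commit j)
  owners := by
    intro p hp
    rcases hp with h | h
    · subst h; exact Set.mem_insert _ _
    · exact Set.mem_insert_of_mem _ (S.owners p h)

end Schedule

/-- A version order `≪` for a schedule `S`: for each data item `x`, an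
irreflexive (strict) total order on the versions of `x` written in `S`;
`lt x i k` means `x_i <_v x_k`. -/
structure VersionOrder {Tx Item : Type*} (S : Schedule Tx Item) where
  lt : Item → Tx → Tx → Prop
  irrefl : ∀ x i, ¬ lt x i i
  trans : ∀ x i j k, lt x i j → lt x j k → lt x i k
  total : ∀ x i j, S.writes i x → S.writes j x → i ≠ j → lt x i j ∨ lt x j i

variable {Tx Item : Type*}

/-- The edge `t_a →(wr) t_b` of `MVSG(S, ≪)`: the committed transaction `t_b`
reads some version written by the committed transaction `t_a`. -/
def wrEdge (S : Schedule Tx Item) (a b : Tx) : Prop :=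
  S.committed a ∧ S.committed b ∧ ∃ x : Item, S.readsFrom b x a

/-- The edge `t_a →(rw) t_b` of `MVSG(S, ≪)` (anti-dependency): `t_a` reads a
version `x_j` and the committed `t_b` writes `x_b` with `x_j <_v x_b`. -/
def rwEdge (S : Schedule Tx Item) (vlt : Item → Tx → Tx → Prop) (a b : Tx) : Prop :=
  a ≠ b ∧ S.committed a ∧ S.committed b ∧
    ∃ (x : Item) (j : Tx), S.committed j ∧ S.readsFrom a x j ∧
      S.writes b x ∧ vlt x j b

/-- The edge `t_a →(ww) t_b` of `MVSG(S, ≪)`: `t_a` writes `x_a`, some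
committed `t_i` (distinct from `t_a`) reads the version `x_b` written
by `t_b`, and `x_a <_v x_b`. -/
def wwEdge (S : Schedule Tx Item) (vlt : Item → Tx → Tx → Prop) (a b : Tx) : Prop :=
  a ≠ b ∧ S.committed a ∧ S.committed b ∧
    ∃ (x : Item) (i : Tx), S.committed i ∧ S.readsFrom i x b ∧ i ≠ a ∧
      S.writes a x ∧ vlt x a b

/-- The edge relation of `MVSG(S, ≪)` (nodes are the committed
transactions `trans(CP(S))`). -/
def mvsgEdge (S : Schedule Tx Item) (vlt : Item → Tx → Tx → Prop) (a b : Tx) : Prop :=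
  wrEdge S a b ∨ rwEdge S vlt a b ∨ wwEdge S vlt a b

/-- A relation (graph) is acyclic: no nonempty directed path from a node
to itself. -/
def Acyclic (r : Tx → Tx → Prop) : Prop := ∀ t : Tx, ¬ Relation.TransGen r t t

/-- `RN(t)`: the set of transactions reachable from `t` by a nonempty
directed path. -/
def RN (r : Tx → Tx → Prop) (t : Tx) : Set Tx := {u | Relation.TransGen r t u}

/-- `overwriters_j` : transactions `t_k` with the edge `t_j →(rw) t_k`. -/
def overwriters (S : Schedule Tx Item) (vlt : Item → Tx → Tx → Prop) (tj : Tx) : Set Tx :=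
  {tk | rwEdge S vlt tj tk}

/-- `successors_j` : transactions `t_k` with the edge `t_j →(ww) t_k`. -/
def successors (S : Schedule Tx Item) (vlt : Item → Tx → Tx → Prop) (tj : Tx) : Set Tx :=
  {tk | wwEdge S vlt tj tk}

/-- `M` is a (strict) total order on the set `s`. -/
def IsLinearOrderOn (M : Tx → Tx → Prop) (s : Set Tx) : Prop :=
  (∀ a ∈ s, ¬ M a a) ∧
  (∀ a ∈ s, ∀ b ∈ s, ∀ c ∈ s, M a b → M b c → M a c) ∧
  (∀ a ∈ s, ∀ b ∈ s, a ≠ b → (M a b ∨ M b a))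

/-- `M` topologically sorts `MVSG(S, ≪)`: every edge `t → t'` satisfies `t <_M t'`. -/
def TopoSorts (S : Schedule Tx Item) (vlt : Item → Tx → Tx → Prop)
    (M : Tx → Tx → Prop) : Prop :=
  ∀ a b : Tx, mvsgEdge S vlt a b → M a b

/-- `M` is compatible with the wall-clock precedence order: for committed
`t_i ≠ t_k`, if every operation of `t_i` precedes every operation of `t_k`
in `<_S`, then `t_i <_M t_k`. -/
def RespectsPrecedence (S : Schedule Tx Item) (M : Tx → Tx → Prop) : Prop :=
  ∀ ti tk : Tx, S.committed ti → S.committed tk → ti ≠ tk →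
    (∀ p q : Op Tx Item, S.opOf p ti → S.opOf q tk → S.lt p q) → M ti tk

/-- `S` is strictly serializable: there is a version order `≪` with
`MVSG(S, ≪)` acyclic and a total order `M` on `trans(CP(S))` that
topologically sorts `MVSG(S, ≪)` and is compatible with the wall-clock
precedence order of transactions. -/
def StrictlySerializable (S : Schedule Tx Item) : Prop :=
  ∃ (V : VersionOrder S) (M : Tx → Tx → Prop),
    Acyclic (mvsgEdge S V.lt) ∧
    IsLinearOrderOn M {t : Tx | S.committed t} ∧
    TopoSorts S V.lt M ∧
    RespectsPrecedence S M

/-- NV-Rule: every version `x_j ∈ ws_j` has some version `x_k` of the same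
item with `x_j <_v' x_k`. -/
def NV_Rule (S : Schedule Tx Item) (V' : VersionOrder S) (tj : Tx) : Prop :=
  ∀ x : Item, S.writes tj x → ∃ k : Tx, S.writes k x ∧ V'.lt x tj k

/-- PV-Rule: on versions distinct from the versions written by `t_j`,
`≪'` agrees with `≪`. -/
def PV_Rule (S : Schedule Tx Item) (V V' : VersionOrder S) (tj : Tx) : Prop :=
  ∀ (x : Item) (i k : Tx), S.writes i x → S.writes k x →
    i ≠ tj → k ≠ tj → V.lt x i k → V'.lt x i k

/-- SR-Rule: `t_j ∉ RN(t_j)` in `MVSG(S ∪ {c_j}, ≪')`. -/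
def SR_Rule (S : Schedule Tx Item) (V' : VersionOrder S) (tj : Tx) : Prop :=
  tj ∉ RN (mvsgEdge (S.addCommit tj) V'.lt) tj

/-- ST-Rule: every `t_k ∈ RN(t_j)` (in `MVSG(S ∪ {c_j}, ≪')`) has some
operation `p_j ∈ t_j` with `p_j <_S c_k`. -/
def ST_Rule (S : Schedule Tx Item) (V' : VersionOrder S) (tj : Tx) : Prop :=
  ∀ tk : Tx, tk ∈ RN (mvsgEdge (S.addCommit tj) V'.lt) tj →
    ∃ p : Op Tx Item, S.opOf p tj ∧ S.lt p (Op.commit tk)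

/-- RC-Rule: every version `x_i ∈ rs_j` has `c_i ∈ S`. -/
def RC_Rule (S : Schedule Tx Item) (tj : Tx) : Prop :=
  ∀ (x : Item) (ti : Tx), S.readsFrom tj x ti → S.committed ti

/-- The version order `≪'` satisfies NWR for the triple `(S, ≪, t_j)`. -/
def SatisfiesNWR (S : Schedule Tx Item) (V V' : VersionOrder S) (tj : Tx) : Prop :=
  NV_Rule S V' tj ∧ PV_Rule S V V' tj ∧ SR_Rule S V' tj ∧
    ST_Rule S V' tj ∧ RC_Rule S tj

end MVCC

namespace MVCC

/-- **Lemma 3 (Recoverable).**  Let `S` be a schedule, `≪` a version order for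
`S`, and `t_j ∈ trans(S)` a running transaction (`c_j, a_j ∉ S`), such that
`S` is recoverable, `MVSG(S, ≪)` is acyclic, and `S` is strictly
serializable.  If a version order `≪'` for `S` merely satisfies RC-Rule
(every version `x_i ∈ rs_j` has `c_i ∈ S`) — in particular if it satisfies
NWR — then `S ∪ {c_j}` is recoverable. -/
theorem nwr_recoverable {Tx Item : Type*} (S : Schedule Tx Item)
    (V : VersionOrder S) (tj : Tx)
    (htj : tj ∈ S.trans) (hnc : ¬ S.committed tj) (hna : ¬ S.aborted tj)
    (hrec : S.Recoverable)
    (hacyc : Acyclic (mvsgEdge S V.lt))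
    (hss : StrictlySerializable S)
    (V' : VersionOrder S)
    (hRC : RC_Rule S tj) :
    (S.addCommit tj).Recoverable := by
  intro ta tb hta htb hne hread hcb
  obtain ⟨x, hneq, hw, hr⟩ := hread
  have hwS : S.writes ta x := by
    rcases hw with h | h
    · simp at h
    · exact h
  have hrS : Op.read tb x ta ∈ S.ops := by
    rcases hr with h | h
    · simp at h
    · exact h
  have hreadS : S.readsFrom tb x ta := ⟨hneq, hwS, hrS⟩
  have hta' : ta ∈ S.trans := by
    rcases hta with h | h
    · exact h ▸ htj
    · exact h
  have htb' : tb ∈ S.trans := by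
    rcases htb with h | h
    · exact h ▸ htj
    · exact h
  rcases hcb with h | hcbS
  · -- tb = tj
    have htbj : tb = tj := by injection h
    have hca : S.committed ta := hRC x ta (htbj ▸ hreadS)
    exact ⟨Set.mem_insert_of_mem _ hca, Or.inr ⟨hca, by rw [htbj]⟩⟩
  · obtain ⟨hca, hlt⟩ := hrec ta tb hta' htb' hne ⟨x, hreadS⟩ hcbS
    exact ⟨Set.mem_insert_of_mem _ hca, Or.inl hlt⟩

end MVCC
end

section
/- Let S be a schedule, t_j ∈ trans(S) a running transaction with c_j, a_j ∉ S, S recoverable, and ≪' any version order for S such that RC-Rule holds (every version x_i ∈ rs_j has c_i ∈ S). Then in MVSG(S ∪ {c_j}, ≪') there is no edge of the form t_j →(wr) t_k; consequently, every nonempty directed path starting at t_j begins with an edge t_j → t_k where t_k ∈ overwriters_j or t_k ∈ successors_j, so every transaction in RN(t_j) is reached by a path whose first edge goes into overwriters_j ∪ successors_j. (Theorem 2, Reachable transactions.) -/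
namespace MVCC

/-- **Theorem 2 (Reachable transactions).**  Let `S` be a recoverable
schedule, `t_j ∈ trans(S)` a running transaction (`c_j, a_j ∉ S`), and `≪'`
any version order for `S` such that RC-Rule holds.  Then in
`MVSG(S ∪ {c_j}, ≪')` there is no edge `t_j →(wr) t_k`; consequently, every
edge leaving `t_j` goes into `overwriters_j ∪ successors_j`, so every
nonempty directed path starting at `t_j` begins with an edge into
`overwriters_j ∪ successors_j`; hence every transaction of `RN(t_j)` is
reached by a path whose first edge goes into
`overwriters_j ∪ successors_j`. -/
theorem reachable_transactions {Tx Item : Type*} (S : Schedule Tx Item) (tj : Tx)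
    (htj : tj ∈ S.trans) (hnc : ¬ S.committed tj) (hna : ¬ S.aborted tj)
    (hrec : S.Recoverable)
    (V' : VersionOrder S)
    (hRC : RC_Rule S tj) :
    (∀ tk : Tx, ¬ wrEdge (S.addCommit tj) tj tk) ∧
    (∀ tk : Tx, mvsgEdge (S.addCommit tj) V'.lt tj tk →
      tk ∈ overwriters (S.addCommit tj) V'.lt tj ∪
           successors (S.addCommit tj) V'.lt tj) ∧
    (∀ tm ∈ RN (mvsgEdge (S.addCommit tj) V'.lt) tj,
      ∃ tk ∈ overwriters (S.addCommit tj) V'.lt tj ∪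
             successors (S.addCommit tj) V'.lt tj,
        Relation.ReflTransGen (mvsgEdge (S.addCommit tj) V'.lt) tk tm) := by
  have hNoWr : ∀ tk : Tx, ¬ wrEdge (S.addCommit tj) tj tk := by
    intro tk h
    obtain ⟨hcj, hck, x, hne, hw, hr⟩ := h
    -- write op and read op are in S.ops (they are not commit ops)
    have hwS : S.writes tj x := by
      rcases hw with h | h
      · exact absurd h (by simp [Schedule.addCommit])
      · exact h
    have hrS : Op.read tk x tj ∈ S.ops := by
      rcases hr with h | h
      · exact absurd h (by simp [Schedule.addCommit])
      · exact h
    have hckS : S.committed tk := by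
      rcases hck with h | h
      · exact absurd (Op.commit.inj h) hne
      · exact h
    have htk : tk ∈ S.trans := S.owners _ hrS
    have := hrec tj tk htj htk (fun e => hne e.symm) ⟨x, hne, hwS, hrS⟩ hckS
    exact hnc this.1
  refine ⟨hNoWr, ?_, ?_⟩
  · intro tk h
    rcases h with h | h | h
    · exact absurd h (hNoWr tk)
    · exact Or.inl h
    · exact Or.inr h
  · intro tm hm
    obtain ⟨tk, hedge, hpath⟩ := (Relation.TransGen.head'_iff).mp hm
    refine ⟨tk, ?_, hpath⟩
    rcases hedge with h | h | h
    · exact absurd h (hNoWr tk)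
    · exact Or.inl h
    · exact Or.inr h

end MVCC
end

section
/- Let S be a schedule, t_j ∈ trans(S) a running transaction with c_j, a_j ∉ S, and let ≪ and ≪' be two version orders for S such that PV-Rule holds: for all versions x_i, x_k of a common data item x that are both distinct from the version x_j ∈ ws_j of x (if any), x_i <_v x_k implies x_i <_v' x_k. Then the graphs MVSG(S, ≪) and MVSG(S, ≪') are identical: they have the same node set trans(CP(S)) and exactly the same wr-, rw-, and ww-edges. -/
namespace MVCC

/-- **PV-Rule preserves the MVSG.**  Let `S` be a schedule, `t_j ∈ trans(S)` a
running transaction (`c_j, a_j ∉ S`), and `≪, ≪'` two version orders for `S`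
satisfying PV-Rule.  Then `MVSG(S, ≪)` and `MVSG(S, ≪')` are identical: they
have the same node set (the committed transactions of `S`) and exactly the
same wr-, rw-, and ww-edges. -/
theorem pv_rule_mvsg_identical {Tx Item : Type*} (S : Schedule Tx Item) (tj : Tx)
    (htj : tj ∈ S.trans) (hnc : ¬ S.committed tj) (hna : ¬ S.aborted tj)
    (V V' : VersionOrder S)
    (hPV : PV_Rule S V V' tj) :
    ∀ a b : Tx,
      (wrEdge S a b ↔ wrEdge S a b) ∧
      (rwEdge S V.lt a b ↔ rwEdge S V'.lt a b) ∧
      (wwEdge S V.lt a b ↔ wwEdge S V'.lt a b) ∧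
      (mvsgEdge S V.lt a b ↔ mvsgEdge S V'.lt a b) := by
  -- On versions written by transactions ≠ t_j, ≪ and ≪' agree in both directions.
  have agree : ∀ (x : Item) (i k : Tx), S.writes i x → S.writes k x →
      i ≠ tj → k ≠ tj → (V.lt x i k ↔ V'.lt x i k) := by
    intro x i k hwi hwk hi hk
    constructor
    · exact hPV x i k hwi hwk hi hk
    · intro h'
      by_contra h
      have hik : i ≠ k := by
        rintro rfl; exact V'.irrefl x i h'
      rcases V.total x i k hwi hwk hik with h1 | h1
      · exact h h1
      · exact V'.irrefl x i (V'.trans x i k i h' (hPV x k i hwk hwi hk hi h1))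
  have ne_tj : ∀ t : Tx, S.committed t → t ≠ tj := by
    rintro t ht rfl; exact hnc ht
  intro a b
  have hrw : rwEdge S V.lt a b ↔ rwEdge S V'.lt a b := by
    constructor <;>
    · rintro ⟨hab, hca, hcb, x, j, hcj, hrf, hwb, hlt⟩
      refine ⟨hab, hca, hcb, x, j, hcj, hrf, hwb, ?_⟩
      have := agree x j b hrf.2.1 hwb (ne_tj j hcj) (ne_tj b hcb)
      first
        | exact this.mp hlt
        | exact this.mpr hlt
  have hww : wwEdge S V.lt a b ↔ wwEdge S V'.lt a b := by
    constructor <;>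
    · rintro ⟨hab, hca, hcb, x, i, hci, hrf, hia, hwa, hlt⟩
      refine ⟨hab, hca, hcb, x, i, hci, hrf, hia, hwa, ?_⟩
      have := agree x a b hwa hrf.2.1 (ne_tj a hca) (ne_tj b hcb)
      first
        | exact this.mp hlt
        | exact this.mpr hlt
  refine ⟨Iff.rfl, hrw, hww, ?_⟩
  unfold mvsgEdge
  rw [hrw, hww]

end MVCC
end

section
/- Let S be a schedule and t_j ∈ trans(S) a running transaction with c_j, a_j ∉ S and w_j(x_j) ∈ t_j. Suppose a committed transaction t_k (c_k ∈ S, t_k ≠ t_j) performs a read-modify-write on the data item x, i.e., r_k(x_i) ∈ t_k and w_k(x_k) ∈ t_k where the writer of the version x_i is committed; suppose further that some committed transaction t_m with t_m ≠ t_j reads the version x_k (r_m(x_k) ∈ t_m). If a version order ≪' for S satisfies x_i <_v' x_j <_v' x_k, then MVSG(S ∪ {c_j}, ≪') contains the cycle t_k →(rw) t_j →(ww) t_k; in particular t_j ∈ RN(t_j), so SR-Rule fails and MVSG(S ∪ {c_j}, ≪') is not acyclic. -/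
namespace MVCC

/-- **Read-modify-write breaks SR-Rule.**  Let `S` be a schedule and
`t_j ∈ trans(S)` a running transaction (`c_j, a_j ∉ S`) with
`w_j(x_j) ∈ t_j`.  Suppose a committed transaction `t_k ≠ t_j` performs a
read-modify-write on the item `x`, i.e. `r_k(x_i) ∈ t_k` and
`w_k(x_k) ∈ t_k`, where the writer `t_i` of the version `x_i` is committed;
and suppose some committed transaction `t_m ≠ t_j` reads the version `x_k`.
If a version order `≪'` for `S` satisfies `x_i <_v' x_j <_v' x_k`, then
`MVSG(S ∪ {c_j}, ≪')` contains the cycle `t_k →(rw) t_j →(ww) t_k`;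
in particular `t_j ∈ RN(t_j)`, SR-Rule fails, and `MVSG(S ∪ {c_j}, ≪')` is
not acyclic. -/
theorem rmw_breaks_sr_rule {Tx Item : Type*} (S : Schedule Tx Item)
    (tj : Tx) (x : Item)
    (htj : tj ∈ S.trans) (hnc : ¬ S.committed tj) (hna : ¬ S.aborted tj)
    (hwj : S.writes tj x)
    (tk ti tm : Tx)
    (hck : S.committed tk) (hktj : tk ≠ tj)
    (hreadk : S.readsFrom tk x ti) (hci : S.committed ti)
    (hwk : S.writes tk x)
    (hcm : S.committed tm) (hmtj : tm ≠ tj)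
    (hreadm : S.readsFrom tm x tk)
    (V' : VersionOrder S)
    (hij : V'.lt x ti tj) (hjk : V'.lt x tj tk) :
    rwEdge (S.addCommit tj) V'.lt tk tj ∧
    wwEdge (S.addCommit tj) V'.lt tj tk ∧
    tj ∈ RN (mvsgEdge (S.addCommit tj) V'.lt) tj ∧
    ¬ SR_Rule S V' tj ∧
    ¬ Acyclic (mvsgEdge (S.addCommit tj) V'.lt) := by
  set S' := S.addCommit tj with hS'
  have hops : ∀ p : Op Tx Item, p ∈ S.ops → p ∈ S'.ops := fun p hp =>
    Set.mem_insert_of_mem _ hp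
  have hc' : ∀ t, S.committed t → S'.committed t := fun t ht => hops _ ht
  have hcj' : S'.committed tj := Set.mem_insert _ _
  have hw' : ∀ t y, S.writes t y → S'.writes t y := fun t y h => hops _ h
  have hrf' : ∀ a y b, S.readsFrom a y b → S'.readsFrom a y b := by
    rintro a y b ⟨h1, h2, h3⟩
    exact ⟨h1, hw' _ _ h2, hops _ h3⟩
  have hrw : rwEdge S' V'.lt tk tj :=
    ⟨hktj, hc' _ hck, hcj', x, ti, hc' _ hci, hrf' _ _ _ hreadk,
      hw' _ _ hwj, hij⟩
  have hww : wwEdge S' V'.lt tj tk :=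
    ⟨fun h => hktj h.symm, hcj', hc' _ hck, x, tm, hc' _ hcm,
      hrf' _ _ _ hreadm, hmtj, hw' _ _ hwj, hjk⟩
  have hmem : tj ∈ RN (mvsgEdge S' V'.lt) tj :=
    Relation.TransGen.head (Or.inr (Or.inr hww))
      (Relation.TransGen.single (Or.inr (Or.inl hrw)))
  exact ⟨hrw, hww, hmem, fun h => h hmem, fun h => h tj hmem⟩

end MVCC
end

section
/- Let S be a recoverable schedule, t_j ∈ trans(S) a running transaction with c_j, a_j ∉ S for which RC-Rule holds (every version x_i ∈ rs_j has c_i ∈ S), and ≪' a version order for S. In MVSG(S ∪ {c_j}, ≪'), let successors_j := { t_k : the graph contains the edge t_j →(ww) t_k } and let T := successors_j ∪ ⋃_{t_k ∈ successors_j} RN(t_k). Suppose that for every t_m ∈ T: (C) there exist no versions y_m ∈ ws_m and y_n ∈ rs_j of a common data item y with y_m <_v' y_n, and no version of a data item written by t_m is read by t_j (i.e., no y_m ∈ ws_m with y_m ∈ rs_j); and (D) there exist no versions y_g ∈ rs_m and y_j ∈ ws_j of a common data item y with y_g <_v' y_j. Then no transaction t_k ∈ successors_j has a directed path to t_j in MVSG(S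 ∪ {c_j}, ≪'). -/
namespace MVCC

/-- **Correctness of the `successors_j` validation (Algorithm 1).**  Let `S`
be a recoverable schedule, `t_j ∈ trans(S)` a running transaction
(`c_j, a_j ∉ S`) for which RC-Rule holds, and `≪'` a version order for `S`.
In `MVSG(S ∪ {c_j}, ≪')`, let `T := successors_j ∪ ⋃_{t_k ∈ successors_j}
RN(t_k)`.  Suppose for every `t_m ∈ T`:
(C) there are no versions `y_m ∈ ws_m` and `y_n ∈ rs_j` of a common item
`y` with `y_m <_v' y_n`, and no version written by `t_m` is read by `t_j`;
(D) there are no versions `y_g ∈ rs_m` and `y_j ∈ ws_j` of a common item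
`y` with `y_g <_v' y_j`.
Then no transaction of `successors_j` has a directed path to `t_j` in
`MVSG(S ∪ {c_j}, ≪')`. -/
theorem successors_validation {Tx Item : Type*} (S : Schedule Tx Item) (tj : Tx)
    (htj : tj ∈ S.trans) (hnc : ¬ S.committed tj) (hna : ¬ S.aborted tj)
    (hrec : S.Recoverable)
    (hRC : RC_Rule S tj)
    (V' : VersionOrder S)
    (T : Set Tx)
    (hT : T = successors (S.addCommit tj) V'.lt tj ∪
        ⋃ tk ∈ successors (S.addCommit tj) V'.lt tj,
          RN (mvsgEdge (S.addCommit tj) V'.lt) tk)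
    (hC1 : ∀ tm ∈ T, ∀ (y : Item) (n : Tx),
        S.writes tm y → S.readsFrom tj y n → ¬ V'.lt y tm n)
    (hC2 : ∀ tm ∈ T, ∀ y : Item, S.writes tm y → ¬ S.readsFrom tj y tm)
    (hD : ∀ tm ∈ T, ∀ (y : Item) (g : Tx),
        S.readsFrom tm y g → S.writes tj y → ¬ V'.lt y g tj) :
    ∀ tk ∈ successors (S.addCommit tj) V'.lt tj,
      ¬ Relation.TransGen (mvsgEdge (S.addCommit tj) V'.lt) tk tj := by

  intro tk hk hpath
  -- Basic facts about S.addCommit tj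
  have hw_iff : ∀ (w : Tx) (x : Item), (S.addCommit tj).writes w x ↔ S.writes w x := by
    intro w x
    simp [Schedule.writes, Schedule.addCommit]
  have hrf_iff : ∀ (a : Tx) (x : Item) (w : Tx),
      (S.addCommit tj).readsFrom a x w ↔ S.readsFrom a x w := by
    intro a x w
    simp [Schedule.readsFrom, Schedule.addCommit, Schedule.writes]
  have hc_iff : ∀ i : Tx, (S.addCommit tj).committed i ↔ i = tj ∨ S.committed i := by
    intro i
    simp [Schedule.committed, Schedule.addCommit]
  -- the last edge of the path goes from some tm ∈ T to tj
  have hlast : ∃ tm, tm ∈ T ∧ mvsgEdge (S.addCommit tj) V'.lt tm tj := by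
    cases hpath with
    | single h => exact ⟨tk, by rw [hT]; exact Or.inl hk, h⟩
    | tail hp h =>
      refine ⟨_, ?_, h⟩
      rw [hT]
      right
      exact Set.mem_biUnion hk hp
  obtain ⟨tm, hm, hedge⟩ := hlast
  rcases hedge with hwr | hrw | hww
  · -- wr edge: tj reads a version written by tm, contradicting (C2)
    obtain ⟨_, _, x, hrf⟩ := hwr
    rw [hrf_iff] at hrf
    exact hC2 tm hm x hrf.2.1 hrf
  · -- rw edge: tm reads y_g, tj writes y, y_g <' y_tj, contradicting (D)
    obtain ⟨_, _, _, x, g, _, hrf, hw, hlt⟩ := hrw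
    rw [hrf_iff] at hrf
    rw [hw_iff] at hw
    exact hD tm hm x g hrf hw hlt
  · -- ww edge: some committed t_i reads a version written by tj;
    -- recoverability then forces c_j ∈ S, contradiction
    obtain ⟨_, _, _, x, i, hci, hrf, _, _, _⟩ := hww
    rw [hrf_iff] at hrf
    rw [hc_iff] at hci
    rcases hci with rfl | hci
    · exact hrf.1 rfl
    · have hitr : i ∈ S.trans := S.owners (Op.read i x tj) hrf.2.2
      have := hrec tj i htj hitr (Ne.symm hrf.1) ⟨x, hrf⟩ hci
      exact hnc this.1

end MVCC
end
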